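/- arXiv:1011.1657 — 2 statements merged into one kernel-verified Lean document; each statement's English description precedes it below -/
import Mathlib

section
/- Let ħ, c, G, M, r be positive real numbers. Define the Bekenstein–Hawking entropy of a sphere of radius r as S_BH = c³·A/(4·G·ħ) with area A = 4π·r², and suppose the Unruh temperature T_U satisfies the holographic equipartition relation M·c² = 2·T_U·S_BH. Then the acceleration a defined by a = 2π·c·T_U/ħ equals G·M/r², Newton's gravitational acceleration. -/
/-- Newton's gravitational acceleration from holographic equipartition:
if `M·c² = 2·T_U·S_BH` with `S_BH = c³·A/(4·G·hbar)`, `A = 4π·r²`, then the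
acceleration `a = 2π·c·T_U/hbar` equals `G·M/r²`. -/
theorem newton_acceleration_holographic (hbar c G M r : ℝ)
    (hhbar : 0 < hbar) (hc : 0 < c) (hG : 0 < G) (hM : 0 < M) (hr : 0 < r)
    (A S_BH T_U a : ℝ)
    (hA : A = 4 * Real.pi * r ^ 2)
    (hS : S_BH = c ^ 3 * A / (4 * G * hbar))
    (hequi : M * c ^ 2 = 2 * T_U * S_BH)
    (ha : a = 2 * Real.pi * c * T_U / hbar) :
    a = G * M / r ^ 2 := by
  subst hA hS ha
  have hpi := Real.pi_pos
  field_simp at hequi ⊢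
  nlinarith [sq_nonneg c, mul_pos hc hr, hpi, hhbar, hG,
    mul_pos (mul_pos hc hc) hc]
end

section
/- Let ħ, c, G, M, m, r, Δx be positive real numbers. Suppose the Unruh temperature T_U satisfies M·c² = 2·T_U·S_BH with S_BH = c³·(4π·r²)/(4·G·ħ), and suppose the horizon entropy change of a test particle of mass m at distance Δx is ΔS = 2π·c·m·Δx/ħ. Then the entropic force F = T_U·ΔS/Δx equals G·M·m/r², Newton's law of universal gravitation. -/
/-- Newton's law of universal gravitation from information loss: with
`M·c² = 2·T_U·S_BH`, `S_BH = c³·(4π·r²)/(4·G·hbar)`, and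
`ΔS = 2π·c·m·Δx/hbar`, the entropic force `F = T_U·ΔS/Δx` equals `G·M·m/r²`. -/
theorem newton_gravity_entropic (hbar c G M m r Δx : ℝ)
    (hhbar : 0 < hbar) (hc : 0 < c) (hG : 0 < G) (hM : 0 < M) (hm : 0 < m)
    (hr : 0 < r) (hΔx : 0 < Δx)
    (S_BH T_U ΔS F : ℝ)
    (hS : S_BH = c ^ 3 * (4 * Real.pi * r ^ 2) / (4 * G * hbar))
    (hequi : M * c ^ 2 = 2 * T_U * S_BH)
    (hΔS : ΔS = 2 * Real.pi * c * m * Δx / hbar)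
    (hF : F = T_U * ΔS / Δx) :
    F = G * M * m / r ^ 2 := by
  have hπ := Real.pi_pos
  have hT : T_U = M * c ^ 2 * (G * hbar) / (2 * Real.pi * r ^ 2 * c ^ 3) := by
    subst hS
    field_simp at hequi ⊢
    nlinarith [hequi, hπ, hc.ne', hr.ne']
  subst hF hΔS hT
  field_simp
end
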